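/- The function x ↦ log(1 + x + x²) + x²/6 is convex on ℝ. -/

import Mathlib

open Real

private lemma hg_pos (x : ℝ) : 0 < 1 + x + x ^ 2 := by nlinarith [sq_nonneg (x + 1/2)]

private lemma hp_deriv (x : ℝ) : HasDerivAt (fun x : ℝ => 1 + x + x ^ 2) (1 + 2 * x) x := by
  have h : HasDerivAt (fun x : ℝ => 1 + x + x ^ 2) (0 + 1 + 2 * x ^ 1) x :=
    ((hasDerivAt_const x 1).add (hasDerivAt_id x)).add (hasDerivAt_pow 2 x)
  simpa using h

private lemma hd1 (x : ℝ) :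
    HasDerivAt (fun x : ℝ => Real.log (1 + x + x ^ 2) + x ^ 2 / 6)
      ((1 + 2 * x) / (1 + x + x ^ 2) + x / 3) x := by
  have hlog : HasDerivAt (fun x : ℝ => Real.log (1 + x + x ^ 2))
      ((1 + x + x ^ 2)⁻¹ * (1 + 2 * x)) x :=
    by have h := (Real.hasDerivAt_log (hg_pos x).ne').comp x (hp_deriv x); exact h
  have hsq : HasDerivAt (fun x : ℝ => x ^ 2 / 6) ((2 * x ^ 1) / 6) x :=
    (hasDerivAt_pow 2 x).div_const 6
  have := hlog.add hsq
  refine this.congr_deriv ?_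
  ring

private lemma deriv1_eq :
    deriv (fun x : ℝ => Real.log (1 + x + x ^ 2) + x ^ 2 / 6)
      = fun x : ℝ => (1 + 2 * x) / (1 + x + x ^ 2) + x / 3 := by
  funext x
  exact (hd1 x).deriv

private lemma hd2 (x : ℝ) :
    HasDerivAt (fun x : ℝ => (1 + 2 * x) / (1 + x + x ^ 2) + x / 3)
      ((2 * (1 + x + x ^ 2) - (1 + 2 * x) * (1 + 2 * x)) / (1 + x + x ^ 2) ^ 2 + 1 / 3) x := by
  have hnum : HasDerivAt (fun x : ℝ => 1 + 2 * x) 2 x := by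
    simpa using (hasDerivAt_id x).const_mul 2 |>.const_add 1
  have hdiv := hnum.div (hp_deriv x) (hg_pos x).ne'
  have hlin : HasDerivAt (fun x : ℝ => x / 3) (1 / 3) x := by
    simpa using (hasDerivAt_id x).div_const 3
  have := hdiv.add hlin
  exact this

/-- The function `x ↦ log (1 + x + x²) + x²/6` is convex on `ℝ`. -/
theorem log_quadratic_convex :
    ConvexOn ℝ Set.univ (fun x : ℝ => Real.log (1 + x + x ^ 2) + x ^ 2 / 6) := by
  apply convexOn_of_deriv2_nonneg convex_univ
  · exact fun x _ => ((hd1 x).continuousAt).continuousWithinAt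
  · exact fun x _ => ((hd1 x).differentiableAt).differentiableWithinAt
  · intro x _
    rw [deriv1_eq]
    exact ((hd2 x).differentiableAt).differentiableWithinAt
  · intro x _
    rw [show deriv^[2] (fun x : ℝ => Real.log (1 + x + x ^ 2) + x ^ 2 / 6)
        = deriv (deriv (fun x : ℝ => Real.log (1 + x + x ^ 2) + x ^ 2 / 6)) from rfl,
      deriv1_eq, (hd2 x).deriv]
    have hg := hg_pos x
    have key : (2 * (1 + x + x ^ 2) - (1 + 2 * x) * (1 + 2 * x)) / (1 + x + x ^ 2) ^ 2 + 1 / 3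
        = ((x - 1) * (x + 2)) ^ 2 / (3 * (1 + x + x ^ 2) ^ 2) := by
      field_simp
      ring
    rw [key]
    positivity
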